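/- Let α be a map from the dyadic intervals of ℝ to [0,∞) with finite Carleson measure norm ‖α‖_CM = sup_{J dyadic} |J|^{-1} Σ_{I dyadic, I⊂J} α(I). Then for every 1 < p < ∞ there is a constant C_p such that for every dyadic interval J, ‖Σ_{I dyadic, I⊂J} (α(I)/|I|) 1_I‖_{L^p(ℝ)} ≤ C_p ‖α‖_CM |J|^{1/p}. -/

import Mathlib

open MeasureTheory
open scoped ENNReal NNReal
attribute [local instance] Classical.propDecidable

/-- The dyadic interval `[n 2^k, (n+1) 2^k)`. -/
noncomputable def dyI (k n : ℤ) : Set ℝ :=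
  Set.Ico ((n : ℝ) * 2 ^ k) (((n : ℝ) + 1) * 2 ^ k)

lemma two_zpow_pos (k : ℤ) : (0:ℝ) < 2 ^ k := zpow_pos two_pos k

lemma measurableSet_dyI (k n : ℤ) : MeasurableSet (dyI k n) := measurableSet_Ico

lemma volume_dyI (k n : ℤ) : volume (dyI k n) = ENNReal.ofReal ((2:ℝ) ^ k) := by
  rw [dyI, Real.volume_Ico]
  congr 1
  ring

lemma mem_dyI_iff {k n : ℤ} {x : ℝ} : x ∈ dyI k n ↔ n = ⌊x / 2 ^ k⌋ := by
  have h2 := two_zpow_pos k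
  rw [dyI, Set.mem_Ico, eq_comm, Int.floor_eq_iff]
  constructor
  · rintro ⟨h1, h3⟩
    constructor
    · rwa [le_div_iff₀ h2]
    · rwa [div_lt_iff₀ h2]
  · rintro ⟨h1, h3⟩
    constructor
    · rwa [← le_div_iff₀ h2]
    · rwa [← div_lt_iff₀ h2]

lemma mem_dyI_floor {k : ℤ} (x : ℝ) : x ∈ dyI k ⌊x / 2 ^ k⌋ := mem_dyI_iff.2 rfl

lemma dyI_subset {k l n m : ℤ} (hkl : k ≤ l) {x : ℝ}
    (hx1 : x ∈ dyI k n) (hx2 : x ∈ dyI l m) : dyI k n ⊆ dyI l m := by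
  have h2k := two_zpow_pos k
  set d : ℕ := (l - k).toNat with hd
  have hld : (2:ℝ) ^ l = ((2 ^ d : ℤ) : ℝ) * 2 ^ k := by
    push_cast
    rw [← zpow_natCast (2:ℝ) d, ← zpow_add₀ (two_ne_zero)]
    congr 1
    omega
  rw [dyI, Set.mem_Ico] at hx1 hx2
  -- key integer inequalities
  have key : ∀ a b : ℤ, (a:ℝ) * 2 ^ k < (b:ℝ) * 2 ^ k → ((a:ℝ) + 1) * 2 ^ k ≤ (b:ℝ) * 2 ^ k := by
    intro a b h
    have : (a:ℝ) < (b:ℝ) := by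
      have := lt_of_mul_lt_mul_right h h2k.le
      exact this
    have hab : a < b := by exact_mod_cast this
    have : (a:ℝ) + 1 ≤ (b:ℝ) := by exact_mod_cast hab
    exact mul_le_mul_of_nonneg_right this h2k.le
  have e1 : ((m:ℝ)) * 2 ^ l = ((m * 2 ^ d : ℤ) : ℝ) * 2 ^ k := by
    rw [hld]; push_cast; ring
  have e2 : ((m:ℝ) + 1) * 2 ^ l = (((m + 1) * 2 ^ d : ℤ) : ℝ) * 2 ^ k := by
    rw [hld]; push_cast; ring
  have hleft : ((m:ℝ)) * 2 ^ l ≤ (n:ℝ) * 2 ^ k := by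
    have h1 : ((m * 2 ^ d : ℤ) : ℝ) * 2 ^ k < ((n:ℝ) + 1) * 2 ^ k := by
      rw [← e1]; exact lt_of_le_of_lt hx2.1 hx1.2
    have := key (m * 2 ^ d) (n + 1) (by push_cast at h1 ⊢; linarith)
    rw [e1]
    push_cast at this ⊢
    linarith
  have hright : ((n:ℝ) + 1) * 2 ^ k ≤ ((m:ℝ) + 1) * 2 ^ l := by
    have h1 : (n:ℝ) * 2 ^ k < (((m + 1) * 2 ^ d : ℤ) : ℝ) * 2 ^ k := by
      rw [← e2]; exact lt_of_le_of_lt hx1.1 hx2.2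
    have := key n ((m + 1) * 2 ^ d) (by push_cast at h1 ⊢; linarith)
    rw [e2]
    push_cast at this ⊢
    linarith
  intro y hy
  rw [dyI, Set.mem_Ico] at hy ⊢
  exact ⟨le_trans hleft hy.1, lt_of_lt_of_le hy.2 hright⟩

lemma scale_le_of_subset {k l n m : ℤ} (h : dyI k n ⊆ dyI l m) : k ≤ l := by
  have hv := measure_mono (μ := volume) h
  rw [volume_dyI, volume_dyI] at hv
  have := (ENNReal.ofReal_le_ofReal_iff (two_zpow_pos l).le).1 hv
  exact (zpow_le_zpow_iff_right₀ (one_lt_two)).1 this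

lemma floor_eq_on {k j n : ℤ} (hkj : k ≤ j) {x y : ℝ}
    (hx : x ∈ dyI k n) (hy : y ∈ dyI k n) : ⌊x / 2 ^ j⌋ = ⌊y / 2 ^ j⌋ := by
  have hsub : dyI k n ⊆ dyI j ⌊x / 2 ^ j⌋ := dyI_subset hkj hx (mem_dyI_floor x)
  exact mem_dyI_iff.1 (hsub hy)

/-- The single-scale term. -/
noncomputable def dyT (α : ℤ × ℤ → ℝ) (j : ℤ) (x : ℝ) : ℝ≥0∞ :=
  ENNReal.ofReal (α (j, ⌊x / 2 ^ j⌋)) / ENNReal.ofReal ((2:ℝ) ^ j)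

/-- The full sum below scale `l`. -/
noncomputable def dyF (α : ℤ × ℤ → ℝ) (l : ℤ) (x : ℝ) : ℝ≥0∞ :=
  ∑' j : ℤ, if j ≤ l then dyT α j x else 0

/-- The partial sum over scales in `[k, l]`. -/
noncomputable def dyS (α : ℤ × ℤ → ℝ) (l : ℤ) (x : ℝ) (k : ℤ) : ℝ≥0∞ :=
  ∑ j ∈ Finset.Icc k l, dyT α j x

/-- The pair-indexed sum appearing in the theorem statement. -/
noncomputable def dyP (α : ℤ × ℤ → ℝ) (l m : ℤ) (x : ℝ) : ℝ≥0∞ :=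
  ∑' r : ℤ × ℤ,
    if dyI r.1 r.2 ⊆ dyI l m
    then (dyI r.1 r.2).indicator
      (fun _ => ENNReal.ofReal (α r) / ENNReal.ofReal ((2:ℝ) ^ r.1)) x
    else 0

lemma measurable_dyT (α : ℤ × ℤ → ℝ) (j : ℤ) : Measurable (dyT α j) := by
  have h1 : Measurable fun x : ℝ => ⌊x / 2 ^ j⌋ :=
    Int.measurable_floor.comp (measurable_id.div_const _)
  exact (measurable_from_top (f := fun n : ℤ =>
    ENNReal.ofReal (α (j, n)) / ENNReal.ofReal ((2:ℝ) ^ j))).comp h1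

lemma measurable_dyF (α : ℤ × ℤ → ℝ) (l : ℤ) : Measurable (dyF α l) := by
  apply Measurable.ennreal_tsum
  intro j
  by_cases h : j ≤ l
  · simpa [h] using measurable_dyT α j
  · simpa [h] using measurable_const

lemma dyS_antitone (α : ℤ × ℤ → ℝ) (l : ℤ) (x : ℝ) {k k' : ℤ} (h : k ≤ k') :
    dyS α l x k' ≤ dyS α l x k :=
  Finset.sum_le_sum_of_subset (Finset.Icc_subset_Icc_left h)

lemma dyF_eq_iSup (α : ℤ × ℤ → ℝ) (l : ℤ) (x : ℝ) :
    dyF α l x = ⨆ k : ℤ, dyS α l x k := by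
  apply le_antisymm
  · rw [dyF, ENNReal.tsum_eq_iSup_sum]
    apply iSup_le; intro s
    rcases s.eq_empty_or_nonempty with rfl | hs
    · simp
    · set k := s.min' hs with hk
      refine le_iSup_of_le k ?_
      have h1 : ∑ j ∈ s ∩ Finset.Icc k l, (if j ≤ l then dyT α j x else 0)
          = ∑ j ∈ s, (if j ≤ l then dyT α j x else 0) := by
        apply Finset.sum_subset (Finset.inter_subset_left)
        intro j hj hj2
        have hjk : k ≤ j := s.min'_le j hj
        have : ¬ j ≤ l := by
          intro hjl
          exact hj2 (Finset.mem_inter.2 ⟨hj, Finset.mem_Icc.2 ⟨hjk, hjl⟩⟩)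
        simp [this]
      rw [← h1]
      calc ∑ j ∈ s ∩ Finset.Icc k l, (if j ≤ l then dyT α j x else 0)
          ≤ ∑ j ∈ Finset.Icc k l, (if j ≤ l then dyT α j x else 0) :=
            Finset.sum_le_sum_of_subset Finset.inter_subset_right
        _ = dyS α l x k := by
            apply Finset.sum_congr rfl
            intro j hj
            simp [(Finset.mem_Icc.1 hj).2]
  · apply iSup_le; intro k
    have : dyS α l x k = ∑ j ∈ Finset.Icc k l, (if j ≤ l then dyT α j x else 0) := by
      apply Finset.sum_congr rfl
      intro j hj
      simp [(Finset.mem_Icc.1 hj).2]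
    rw [this, dyF]
    exact ENNReal.sum_le_tsum _

lemma dyS_le_dyF (α : ℤ × ℤ → ℝ) (l : ℤ) (x : ℝ) (k : ℤ) :
    dyS α l x k ≤ dyF α l x := by
  rw [dyF_eq_iSup]; exact le_iSup _ k

lemma dyS_congr (α : ℤ × ℤ → ℝ) (l : ℤ) {k n k' : ℤ} (hk : k ≤ k') {x y : ℝ}
    (hx : x ∈ dyI k n) (hy : y ∈ dyI k n) : dyS α l x k' = dyS α l y k' := by
  apply Finset.sum_congr rfl
  intro j hj
  have hjk : k ≤ j := le_trans hk (Finset.mem_Icc.1 hj).1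
  rw [dyT, dyT, floor_eq_on hjk hx hy]

lemma dyF_split (α : ℤ × ℤ → ℝ) {k l : ℤ} (hkl : k ≤ l) (x : ℝ) :
    dyF α l x = dyF α k x + dyS α l x (k + 1) := by
  have hpt : ∀ j : ℤ, (if j ≤ l then dyT α j x else 0)
      = (if j ≤ k then dyT α j x else 0) + (if j ∈ Finset.Icc (k+1) l then dyT α j x else 0) := by
    intro j
    rcases le_or_gt j k with h | h
    · have h3 : ¬ (k + 1 ≤ j) := by omega
      simp [h, le_trans h hkl, Finset.mem_Icc, h3]
    · rcases le_or_gt j l with h2 | h2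
      · have h3 : k + 1 ≤ j := by omega
        simp [h2, Finset.mem_Icc, h3, not_le.2 h]
      · have h3 : ¬ (j ≤ k) := by omega
        simp [not_le.2 h2, h3, Finset.mem_Icc]
  rw [dyF, tsum_congr hpt, ENNReal.tsum_add]
  congr 1
  rw [dyS]
  rw [tsum_eq_sum (s := Finset.Icc (k+1) l) (fun j hj => by simp [hj])]
  apply Finset.sum_congr rfl
  intro j hj
  simp [hj]

lemma dyP_eq_dyF (α : ℤ × ℤ → ℝ) {l m : ℤ} {x : ℝ} (hx : x ∈ dyI l m) :
    dyP α l m x = dyF α l x := by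
  rw [dyP, ENNReal.tsum_prod']
  apply tsum_congr; intro k
  by_cases hkl : k ≤ l
  · rw [if_pos hkl]
    rw [tsum_eq_single ⌊x / 2 ^ k⌋ ?_]
    · have hxk : x ∈ dyI k ⌊x / 2 ^ k⌋ := mem_dyI_floor x
      have hsub : dyI k ⌊x / 2 ^ k⌋ ⊆ dyI l m := dyI_subset hkl hxk hx
      rw [if_pos hsub, Set.indicator_of_mem hxk, dyT]
    · intro n hn
      by_cases hc : dyI k n ⊆ dyI l m
      · rw [if_pos hc, Set.indicator_of_notMem]
        intro hxn
        exact hn (mem_dyI_iff.1 hxn)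
      · rw [if_neg hc]
  · rw [if_neg hkl]
    have : ∀ n : ℤ, (if dyI k n ⊆ dyI l m
        then (dyI k n).indicator
          (fun _ => ENNReal.ofReal (α (k, n)) / ENNReal.ofReal ((2:ℝ) ^ k)) x
        else 0) = 0 := by
      intro n
      by_cases hc : dyI k n ⊆ dyI l m
      · exact absurd (scale_le_of_subset hc) hkl
      · rw [if_neg hc]
    rw [tsum_congr this, tsum_zero]

lemma dyP_zero (α : ℤ × ℤ → ℝ) {l m : ℤ} {x : ℝ} (hx : x ∉ dyI l m) :
    dyP α l m x = 0 := by
  rw [dyP]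
  have : ∀ r : ℤ × ℤ, (if dyI r.1 r.2 ⊆ dyI l m
      then (dyI r.1 r.2).indicator
        (fun _ => ENNReal.ofReal (α r) / ENNReal.ofReal ((2:ℝ) ^ r.1)) x
      else 0) = 0 := by
    intro r
    by_cases hc : dyI r.1 r.2 ⊆ dyI l m
    · rw [if_pos hc, Set.indicator_of_notMem (fun hxr => hx (hc hxr))]
    · rw [if_neg hc]
  rw [tsum_congr this, tsum_zero]

lemma lintegral_dyP (α : ℤ × ℤ → ℝ) (l m : ℤ) :
    ∫⁻ x, dyP α l m x
      = ∑' r : ℤ × ℤ, if dyI r.1 r.2 ⊆ dyI l m then ENNReal.ofReal (α r) else 0 := by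
  rw [show (fun x => dyP α l m x) = fun x => ∑' r : ℤ × ℤ,
      (if dyI r.1 r.2 ⊆ dyI l m
        then (dyI r.1 r.2).indicator
          (fun _ => ENNReal.ofReal (α r) / ENNReal.ofReal ((2:ℝ) ^ r.1)) x
        else 0) from rfl]
  rw [lintegral_tsum (fun r => ?_)]
  · apply tsum_congr; intro r
    by_cases hc : dyI r.1 r.2 ⊆ dyI l m
    · simp only [if_pos hc]
      rw [lintegral_indicator_const (measurableSet_dyI _ _), volume_dyI,
        ENNReal.div_mul_cancel (by simpa using (two_zpow_pos r.1)) ENNReal.ofReal_ne_top]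
    · simp [hc]
  · by_cases hc : dyI r.1 r.2 ⊆ dyI l m
    · simp only [if_pos hc]
      exact ((measurable_const.indicator (measurableSet_dyI _ _))).aemeasurable
    · simp only [if_neg hc]
      exact aemeasurable_const

-- new content

lemma ofReal_zpow_ne_zero (k : ℤ) : ENNReal.ofReal ((2:ℝ) ^ k) ≠ 0 := by
  simpa using (two_zpow_pos k)

lemma left_mem_dyI (k n : ℤ) : ((n:ℝ) * 2 ^ k) ∈ dyI k n := by
  constructor
  · exact le_refl _
  · have := two_zpow_pos k
    nlinarith

/-- The superlevel set within a dyadic interval. -/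
noncomputable def dyE (α : ℤ × ℤ → ℝ) (t : ℝ) (l m : ℤ) : Set ℝ :=
  dyI l m ∩ {x | ENNReal.ofReal t < dyF α l x}

lemma measurableSet_dyE (α : ℤ × ℤ → ℝ) (t : ℝ) (l m : ℤ) : MeasurableSet (dyE α t l m) :=
  (measurableSet_dyI l m).inter (measurable_dyF α l measurableSet_Ioi)

/-- The normalized John–Nirenberg distribution function. -/
noncomputable def dyG (α : ℤ × ℤ → ℝ) (t : ℝ) : ℝ≥0∞ :=
  ⨆ r : ℤ × ℤ, volume (dyE α t r.1 r.2) / ENNReal.ofReal ((2:ℝ) ^ r.1)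

lemma dyE_le (α : ℤ × ℤ → ℝ) (t : ℝ) (l m : ℤ) :
    volume (dyE α t l m) ≤ dyG α t * ENNReal.ofReal ((2:ℝ) ^ l) := by
  have h := le_iSup (fun r : ℤ × ℤ => volume (dyE α t r.1 r.2) / ENNReal.ofReal ((2:ℝ) ^ r.1)) (l, m)
  rw [ENNReal.div_le_iff (ofReal_zpow_ne_zero l) ENNReal.ofReal_ne_top] at h
  exact h

lemma dyG_le_one (α : ℤ × ℤ → ℝ) (t : ℝ) : dyG α t ≤ 1 := by
  apply iSup_le
  rintro ⟨l, m⟩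
  rw [ENNReal.div_le_iff (ofReal_zpow_ne_zero l) ENNReal.ofReal_ne_top, one_mul]
  calc volume (dyE α t l m) ≤ volume (dyI l m) := measure_mono Set.inter_subset_left
    _ = _ := volume_dyI l m

section
variable {α : ℤ × ℤ → ℝ} {N : ℝ}

lemma cheb (hC : ∀ l m : ℤ,
      (∑' r : ℤ × ℤ, if dyI r.1 r.2 ⊆ dyI l m then ENNReal.ofReal (α r) else 0)
        ≤ ENNReal.ofReal N * ENNReal.ofReal ((2:ℝ) ^ l)) (l m : ℤ) :
    ∫⁻ x in dyI l m, dyF α l x ≤ ENNReal.ofReal N * ENNReal.ofReal ((2:ℝ) ^ l) := by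
  have h1 : ∫⁻ x in dyI l m, dyF α l x = ∫⁻ x in dyI l m, dyP α l m x :=
    setLIntegral_congr_fun (measurableSet_dyI l m)
      (fun x hx => (dyP_eq_dyF α hx).symm)
  rw [h1]
  calc ∫⁻ x in dyI l m, dyP α l m x ≤ ∫⁻ x, dyP α l m x := setLIntegral_le_lintegral _ _
    _ = _ := lintegral_dyP α l m
    _ ≤ _ := hC l m

/-- Main recursion step. -/
lemma dyG_step (hN : 0 < N)
    (hC : ∀ l m : ℤ,
      (∑' r : ℤ × ℤ, if dyI r.1 r.2 ⊆ dyI l m then ENNReal.ofReal (α r) else 0)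
        ≤ ENNReal.ofReal N * ENNReal.ofReal ((2:ℝ) ^ l))
    {t : ℝ} (ht : 0 ≤ t) (l m : ℤ) :
    2 * volume (dyE α (t + 2*N) l m) ≤ dyG α t * ENNReal.ofReal ((2:ℝ) ^ l) := by
  classical
  set K : Set (ℤ × ℤ) := {r | dyI r.1 r.2 ⊆ dyI l m ∧
      ENNReal.ofReal (2*N) < dyS α l ((r.2:ℝ) * 2 ^ r.1) r.1 ∧
      dyS α l ((r.2:ℝ) * 2 ^ r.1) (r.1 + 1) ≤ ENNReal.ofReal (2*N)} with hK
  -- values of the stopping sums at arbitrary points of the intervals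
  have hSt : ∀ r ∈ K, ∀ x ∈ dyI r.1 r.2,
      ENNReal.ofReal (2*N) < dyS α l x r.1 ∧ dyS α l x (r.1+1) ≤ ENNReal.ofReal (2*N) := by
    rintro r hr x hx
    obtain ⟨-, h1, h2⟩ := hr
    constructor
    · rwa [dyS_congr α l le_rfl (left_mem_dyI r.1 r.2) hx] at h1
    · rwa [dyS_congr α l (by omega) (left_mem_dyI r.1 r.2) hx] at h2
  -- scales are at most l
  have hscale : ∀ r ∈ K, r.1 ≤ l := fun r hr => scale_le_of_subset hr.1
  -- the cover
  have hcover : dyE α (t + 2*N) l m ⊆ ⋃ r ∈ K, dyE α t r.1 r.2 := by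
    rintro x ⟨hxJ, hxt⟩
    simp only [Set.mem_setOf_eq] at hxt
    have h2N : ENNReal.ofReal (2*N) < dyF α l x := by
      refine lt_of_le_of_lt (ENNReal.ofReal_le_ofReal (by linarith)) hxt
    have hex : ∃ k, ENNReal.ofReal (2*N) < dyS α l x k := by
      rw [dyF_eq_iSup] at h2N
      exact lt_iSup_iff.1 h2N
    have hbdd : ∀ k, ENNReal.ofReal (2*N) < dyS α l x k → k ≤ l := by
      intro k hk
      by_contra hkl
      have : Finset.Icc k l = ∅ := Finset.Icc_eq_empty (by omega)
      rw [dyS, this, Finset.sum_empty] at hk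
      exact (not_lt.2 zero_le) hk
    obtain ⟨k₀, hk₀, hmax⟩ := Int.exists_greatest_of_bdd ⟨l, hbdd⟩ hex
    have hk₀l : k₀ ≤ l := hbdd k₀ hk₀
    set r : ℤ × ℤ := (k₀, ⌊x / 2 ^ k₀⌋) with hr
    have hxr : x ∈ dyI r.1 r.2 := mem_dyI_floor x
    have hsub : dyI r.1 r.2 ⊆ dyI l m := dyI_subset hk₀l hxr hxJ
    have hnext : dyS α l x (k₀ + 1) ≤ ENNReal.ofReal (2*N) := by
      by_contra h
      exact absurd (hmax _ (not_le.1 h)) (by omega)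
    have hrK : r ∈ K := by
      refine ⟨hsub, ?_, ?_⟩
      · rwa [dyS_congr α l le_rfl (left_mem_dyI r.1 r.2) hxr]
      · rwa [dyS_congr α l (by omega) (left_mem_dyI r.1 r.2) hxr]
    refine Set.mem_biUnion hrK ⟨hxr, ?_⟩
    show ENNReal.ofReal t < dyF α r.1 x
    have hsplit := dyF_split α hk₀l x
    have : ENNReal.ofReal t + ENNReal.ofReal (2*N) < dyF α k₀ x + ENNReal.ofReal (2*N) := by
      calc ENNReal.ofReal t + ENNReal.ofReal (2*N) = ENNReal.ofReal (t + 2*N) := by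
            rw [ENNReal.ofReal_add ht (by linarith)]
        _ < dyF α l x := hxt
        _ = dyF α k₀ x + dyS α l x (k₀ + 1) := hsplit
        _ ≤ dyF α k₀ x + ENNReal.ofReal (2*N) := add_le_add le_rfl hnext
    exact (ENNReal.add_lt_add_iff_right ENNReal.ofReal_ne_top).1 this
  -- disjointness
  have hdisj : K.PairwiseDisjoint (fun r : ℤ × ℤ => dyI r.1 r.2) := by
    have key : ∀ r ∈ K, ∀ r' ∈ K, r.1 ≤ r'.1 → ∀ x, x ∈ dyI r.1 r.2 → x ∈ dyI r'.1 r'.2 → r = r' := by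
      rintro r hr r' hr' hle x hx hx'
      rcases eq_or_lt_of_le hle with heq | hlt
      · have : r.2 = r'.2 := by
          rw [mem_dyI_iff.1 hx, mem_dyI_iff.1 hx', heq]
        exact Prod.ext heq this
      · exfalso
        have h1 : dyS α l x r'.1 ≤ dyS α l x (r.1 + 1) := dyS_antitone α l x (by omega)
        have h2 := (hSt r' hr' x hx').1
        have h3 := (hSt r hr x hx).2
        exact absurd (lt_of_lt_of_le h2 (le_trans h1 h3)) (lt_irrefl _)
    rintro r hr r' hr' hne
    rw [Function.onFun, Set.disjoint_left]
    intro x hx hx'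
    rcases le_total r.1 r'.1 with h | h
    · exact hne (key r hr r' hr' h x hx hx')
    · exact hne ((key r' hr' r hr h x hx' hx).symm)
  have hKct : K.Countable := K.to_countable
  -- the union and its measure
  set U : Set ℝ := ⋃ r ∈ K, dyI r.1 r.2 with hU
  have hUvol : volume U = ∑' r : K, volume (dyI r.1.1 r.1.2) :=
    measure_biUnion hKct hdisj (fun r _ => measurableSet_dyI r.1 r.2)
  -- Chebyshev: 2 * volume U ≤ ofReal 2^l
  have hUsub : U ⊆ dyI l m ∩ {x | ENNReal.ofReal (2*N) ≤ dyF α l x} := by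
    rintro x hx
    obtain ⟨r, hrK, hxr⟩ := Set.mem_iUnion₂.1 hx
    refine ⟨hrK.1 hxr, ?_⟩
    have := (hSt r hrK x hxr).1
    exact le_of_lt (lt_of_lt_of_le this (le_trans (dyS_antitone α l x le_rfl) (dyS_le_dyF α l x r.1)))
  have hcheb : ENNReal.ofReal (2*N) * volume (dyI l m ∩ {x | ENNReal.ofReal (2*N) ≤ dyF α l x})
      ≤ ENNReal.ofReal N * ENNReal.ofReal ((2:ℝ) ^ l) := by
    set s := dyI l m ∩ {x | ENNReal.ofReal (2*N) ≤ dyF α l x} with hs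
    have h1 : ENNReal.ofReal (2*N) * volume s = ∫⁻ _ in s, ENNReal.ofReal (2*N) := by
      rw [setLIntegral_const]
    rw [h1]
    calc ∫⁻ _ in s, ENNReal.ofReal (2*N)
        ≤ ∫⁻ x in s, dyF α l x := setLIntegral_mono (measurable_dyF α l) (fun x hx => hx.2)
      _ ≤ ∫⁻ x in dyI l m, dyF α l x := lintegral_mono_set Set.inter_subset_left
      _ ≤ _ := cheb hC l m
  have hU2 : 2 * volume U ≤ ENNReal.ofReal ((2:ℝ) ^ l) := by
    have hNne : ENNReal.ofReal N ≠ 0 := by simpa using hN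
    have h2N : ENNReal.ofReal (2*N) = 2 * ENNReal.ofReal N := by
      rw [ENNReal.ofReal_mul (by norm_num), ENNReal.ofReal_ofNat]
    have hmono : ENNReal.ofReal (2*N) * volume U
        ≤ ENNReal.ofReal N * ENNReal.ofReal ((2:ℝ) ^ l) :=
      le_trans (mul_le_mul_right (measure_mono hUsub) _) hcheb
    rw [h2N] at hmono
    have : ENNReal.ofReal N * (2 * volume U) ≤ ENNReal.ofReal N * ENNReal.ofReal ((2:ℝ) ^ l) := by
      calc ENNReal.ofReal N * (2 * volume U) = 2 * ENNReal.ofReal N * volume U := by ring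
        _ ≤ _ := hmono
    exact (ENNReal.mul_le_mul_iff_right hNne ENNReal.ofReal_ne_top).1 this
  -- put everything together
  calc 2 * volume (dyE α (t + 2*N) l m)
      ≤ 2 * volume (⋃ r ∈ K, dyE α t r.1 r.2) := by
        exact mul_le_mul_right (measure_mono hcover) 2
    _ ≤ 2 * ∑' r : K, volume (dyE α t r.1.1 r.1.2) := by
        exact mul_le_mul_right (measure_biUnion_le volume hKct _) 2
    _ ≤ 2 * ∑' r : K, dyG α t * volume (dyI r.1.1 r.1.2) := by
        refine mul_le_mul_right (ENNReal.tsum_le_tsum fun r => ?_) 2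
        rw [volume_dyI]
        exact dyE_le α t r.1.1 r.1.2
    _ = dyG α t * (2 * volume U) := by
        rw [ENNReal.tsum_mul_left, hUvol]; ring
    _ ≤ dyG α t * ENNReal.ofReal ((2:ℝ) ^ l) := mul_le_mul_right hU2 _

lemma dyG_pow (hN : 0 < N)
    (hC : ∀ l m : ℤ,
      (∑' r : ℤ × ℤ, if dyI r.1 r.2 ⊆ dyI l m then ENNReal.ofReal (α r) else 0)
        ≤ ENNReal.ofReal N * ENNReal.ofReal ((2:ℝ) ^ l)) (k : ℕ) :
    dyG α (2*N*k) ≤ 2⁻¹ ^ k := by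
  induction k with
  | zero => simpa using dyG_le_one α 0
  | succ k ih =>
    have harg : 2*N*((k+1:ℕ):ℝ) = 2*N*k + 2*N := by push_cast; ring
    have hhalf : dyG α (2*N*k + 2*N) ≤ dyG α (2*N*k) / 2 := by
      apply iSup_le
      rintro ⟨l', m'⟩
      rw [ENNReal.div_le_iff (ofReal_zpow_ne_zero l') ENNReal.ofReal_ne_top]
      have hstep := dyG_step hN hC (t := 2*N*k) (by positivity) l' m'
      have h2 : volume (dyE α (2*N*k + 2*N) l' m') * 2 ≤ dyG α (2*N*k) * ENNReal.ofReal ((2:ℝ) ^ l') := by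
        rwa [mul_comm] at hstep
      calc volume (dyE α (2*N*(k:ℝ) + 2*N) l' m')
          ≤ (dyG α (2*N*k) * ENNReal.ofReal ((2:ℝ) ^ l')) / 2 :=
            (ENNReal.le_div_iff_mul_le (Or.inl two_ne_zero) (Or.inl ENNReal.ofNat_ne_top)).2 h2
        _ = dyG α (2*N*k) / 2 * ENNReal.ofReal ((2:ℝ) ^ l') := by
            rw [div_eq_mul_inv, div_eq_mul_inv]; ring
    rw [harg]
    calc dyG α (2*N*k + 2*N) ≤ dyG α (2*N*k) / 2 := hhalf
      _ ≤ (2⁻¹ ^ k) / 2 := ENNReal.div_le_div_right ih 2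
      _ = 2⁻¹ ^ (k+1) := by rw [pow_succ, div_eq_mul_inv]

end

/-- **The dyadic John–Nirenberg inequality for Carleson measures.**  Let
`α : {dyadic intervals} → [0,∞)` (indexed by `(k,n) ↦ [n2^k,(n+1)2^k)`) satisfy the
Carleson measure condition `∑_{I ⊆ J} α(I) ≤ N |J|` for every dyadic `J`.  Then for
`1 < p < ∞` and every dyadic `J = [m2^l,(m+1)2^l)`,
`‖∑_{I ⊆ J} (α(I)/|I|) 1_I‖_p ≤ C_p N |J|^{1/p}`, stated in the equivalent form
`∫ (∑_{I ⊆ J} (α(I)/|I|) 1_I)^p ≤ (C_p N)^p |J|`. -/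
theorem dyadic_john_nirenberg (p : ℝ) (hp : 1 < p) :
    ∃ C : ℝ, 0 < C ∧
      ∀ α : ℤ × ℤ → ℝ, (∀ r, 0 ≤ α r) →
      ∀ N : ℝ, 0 ≤ N →
        (∀ l m : ℤ,
          (∑' r : ℤ × ℤ, if dyI r.1 r.2 ⊆ dyI l m then ENNReal.ofReal (α r) else 0)
            ≤ ENNReal.ofReal N * ENNReal.ofReal ((2:ℝ) ^ l)) →
        ∀ l m : ℤ,
          ∫⁻ x : ℝ,
              (∑' r : ℤ × ℤ,
                if dyI r.1 r.2 ⊆ dyI l m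
                then (dyI r.1 r.2).indicator
                  (fun _ => ENNReal.ofReal (α r) / ENNReal.ofReal ((2:ℝ) ^ r.1)) x
                else 0) ^ p
            ≤ ENNReal.ofReal (C * N) ^ p * ENNReal.ofReal ((2:ℝ) ^ l) := by
  have hp0 : (0:ℝ) < p := lt_trans one_pos hp
  -- the constant
  set n₀ : ℕ := ⌈p⌉₊ with hn₀
  have hsum0 : Summable (fun k : ℕ => ((k:ℝ)) ^ n₀ * (2⁻¹:ℝ) ^ k) := by
    have : ‖(2⁻¹:ℝ)‖ < 1 := by rw [Real.norm_eq_abs, abs_of_pos (by norm_num : (0:ℝ) < 2⁻¹)]; norm_num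
    exact summable_pow_mul_geometric_of_norm_lt_one n₀ this
  have hsumh : Summable (fun k : ℕ => ((k:ℝ) + 1) ^ n₀ * (2⁻¹:ℝ) ^ k) := by
    have h1 := (_root_.summable_nat_add_iff 1).2 hsum0
    have h2 := h1.mul_right 2
    apply h2.congr
    intro k
    push_cast
    have : (2⁻¹:ℝ) ^ (k+1) * 2 = 2⁻¹ ^ k := by
      rw [pow_succ]; ring
    calc ((k:ℝ)+1) ^ n₀ * 2⁻¹ ^ (k+1) * 2 = ((k:ℝ)+1) ^ n₀ * (2⁻¹ ^ (k+1) * 2) := by ring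
      _ = ((k:ℝ)+1) ^ n₀ * 2⁻¹ ^ k := by rw [this]
  set Sig : ℝ := ∑' k : ℕ, ((k:ℝ) + 1) ^ n₀ * (2⁻¹:ℝ) ^ k with hSig
  have hSig0 : 0 ≤ Sig := tsum_nonneg (fun k => by positivity)
  refine ⟨2 * (2 * Sig + 2), by linarith, ?_⟩
  intro α hα N hN hC l m
  -- replace the integrand by dyP
  have hPdef : ∀ x : ℝ, (∑' r : ℤ × ℤ,
      if dyI r.1 r.2 ⊆ dyI l m
      then (dyI r.1 r.2).indicator
        (fun _ => ENNReal.ofReal (α r) / ENNReal.ofReal ((2:ℝ) ^ r.1)) x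
      else 0) = dyP α l m x := fun x => rfl
  simp only [hPdef]
  rcases eq_or_lt_of_le hN with hN0 | hN0
  · -- N = 0 : everything vanishes
    have hzero : ∀ x, dyP α l m x = 0 := by
      intro x
      have h0 := hC l m
      rw [← hN0] at h0
      simp only [ENNReal.ofReal_zero, zero_mul, le_zero_iff] at h0
      have hterm := ENNReal.tsum_eq_zero.1 h0
      rw [dyP]
      apply (ENNReal.tsum_eq_zero).2
      intro r
      by_cases hc : dyI r.1 r.2 ⊆ dyI l m
      · have := hterm r
        rw [if_pos hc] at this ⊢
        rw [Set.indicator_apply]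
        split
        · rw [this, ENNReal.zero_div]
        · rfl
      · rw [if_neg hc]
    simp only [hzero, ENNReal.zero_rpow_of_pos hp0, lintegral_const, zero_mul]
    exact zero_le
  -- main case N > 0
  set v : ℝ≥0∞ := ENNReal.ofReal ((2:ℝ) ^ l) with hv
  -- convert integral to the restricted dyadic form
  have hconv : ∫⁻ x, dyP α l m x ^ p = ∫⁻ x in dyI l m, dyF α l x ^ p := by
    rw [← lintegral_add_compl (fun x => dyP α l m x ^ p) (measurableSet_dyI l m)]
    have h1 : ∫⁻ x in dyI l m, dyP α l m x ^ p = ∫⁻ x in dyI l m, dyF α l x ^ p :=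
      setLIntegral_congr_fun (measurableSet_dyI l m)
        (fun x hx => by rw [dyP_eq_dyF α hx])
    have h2 : ∫⁻ x in (dyI l m)ᶜ, dyP α l m x ^ p = 0 := by
      have : ∫⁻ x in (dyI l m)ᶜ, dyP α l m x ^ p = ∫⁻ _ in (dyI l m)ᶜ, (0:ℝ≥0∞) :=
        setLIntegral_congr_fun (measurableSet_dyI l m).compl
          (fun x hx => by
            rw [dyP_zero α hx, ENNReal.zero_rpow_of_pos hp0])
      rw [this, lintegral_zero]
    rw [h1, h2, add_zero]
  rw [hconv]
  -- the exceptional set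
  set Z : Set ℝ := dyI l m ∩ {x | dyF α l x = ∞} with hZ
  have hZsub : ∀ k : ℕ, Z ⊆ dyE α (2*N*k) l m := by
    rintro k x ⟨hx1, hx2⟩
    exact ⟨hx1, by simp only [Set.mem_setOf_eq] at hx2 ⊢; rw [hx2]; exact ENNReal.ofReal_lt_top⟩
  have hZk : ∀ k : ℕ, volume Z ≤ 2⁻¹ ^ k * v := fun k =>
    le_trans (measure_mono (hZsub k))
      (le_trans (dyE_le α (2*N*k) l m) (mul_le_mul_left (dyG_pow hN0 hC k) v))
  have hZ0 : volume Z = 0 := by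
    by_contra h
    have hvne : v ≠ ∞ := ENNReal.ofReal_ne_top
    have hdiv : volume Z / v ≠ 0 := by
      simp only [ne_eq, ENNReal.div_eq_zero_iff, not_or]
      exact ⟨h, hvne⟩
    obtain ⟨n, hn⟩ := ENNReal.exists_inv_two_pow_lt hdiv
    have : 2⁻¹ ^ n * v < volume Z :=
      (ENNReal.lt_div_iff_mul_lt (Or.inl (ofReal_zpow_ne_zero l)) (Or.inl hvne)).1 hn
    exact absurd (hZk n) (not_le.2 this)
  -- the shells
  set A : ℕ → Set ℝ := fun k => dyI l m ∩
      {x | ENNReal.ofReal (2*N*k) < dyF α l x + ENNReal.ofReal (2*N)} ∩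
      {x | dyF α l x ≤ ENNReal.ofReal (2*N*(k+1))} with hA
  have hcover : dyI l m ⊆ Z ∪ ⋃ k : ℕ, A k := by
    intro x hx
    by_cases hinf : dyF α l x = ∞
    · exact Or.inl ⟨hx, hinf⟩
    right
    have hex : ∃ k : ℕ, dyF α l x ≤ ENNReal.ofReal (2*N*(k+1)) := by
      obtain ⟨a, ha⟩ : ∃ a : ℝ, dyF α l x = ENNReal.ofReal a ∧ 0 ≤ a :=
        ⟨(dyF α l x).toReal, (ENNReal.ofReal_toReal hinf).symm, ENNReal.toReal_nonneg⟩
      obtain ⟨ha, ha0⟩ := ha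
      refine ⟨⌈a / (2*N)⌉₊, ?_⟩
      rw [ha]
      apply ENNReal.ofReal_le_ofReal
      have h1 : a / (2*N) ≤ (⌈a / (2*N)⌉₊ : ℝ) := Nat.le_ceil _
      have h2N : (0:ℝ) < 2*N := by linarith
      calc a = (a / (2*N)) * (2*N) := by field_simp
        _ ≤ (⌈a / (2*N)⌉₊ : ℝ) * (2*N) := mul_le_mul_of_nonneg_right h1 h2N.le
        _ ≤ 2*N*(⌈a / (2*N)⌉₊ + 1) := by nlinarith
    set k := Nat.find hex with hk
    refine Set.mem_iUnion.2 ⟨k, ⟨⟨hx, ?_⟩, Nat.find_spec hex⟩⟩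
    show ENNReal.ofReal (2*N*k) < dyF α l x + ENNReal.ofReal (2*N)
    rcases Nat.eq_zero_or_pos k with hk0 | hkpos
    · rw [hk0]
      simp only [Nat.cast_zero, mul_zero, ENNReal.ofReal_zero]
      refine lt_of_lt_of_le ?_ le_add_self
      simp [hN0]
    · have hk1 : ¬ dyF α l x ≤ ENNReal.ofReal (2*N*(((k-1:ℕ):ℝ)+1)) := Nat.find_min hex (lt_of_lt_of_le (Nat.sub_lt hkpos one_pos) (le_of_eq hk.symm))
      have : ENNReal.ofReal (2*N*k) < dyF α l x := by
        have : ((k:ℝ)) = ((k-1:ℕ):ℝ) + 1 := by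
          have : 1 ≤ k := hkpos
          push_cast [Nat.cast_sub this]
          ring
        rw [this]
        exact not_le.1 hk1
      exact lt_of_lt_of_le this le_self_add
  have hAvol : ∀ k : ℕ, volume (A k) ≤ 2 * 2⁻¹ ^ k * v := by
    intro k
    rcases Nat.eq_zero_or_pos k with hk0 | hkpos
    · rw [hk0]
      simp only [pow_zero, mul_one]
      calc volume (A 0) ≤ volume (dyI l m) := measure_mono (fun x hx => hx.1.1)
        _ = v := volume_dyI l m
        _ ≤ 2 * v := le_mul_of_one_le_left zero_le one_le_two
    · have hsub : A k ⊆ dyE α (2*N*(k-1:ℕ)) l m := by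
        rintro x ⟨⟨hx1, hx2⟩, hx3⟩
        refine ⟨hx1, ?_⟩
        simp only [Set.mem_setOf_eq] at hx2 ⊢
        have hsplit : ENNReal.ofReal (2*N*k) = ENNReal.ofReal (2*N*(k-1:ℕ)) + ENNReal.ofReal (2*N) := by
          rw [← ENNReal.ofReal_add (by positivity) (by linarith)]
          congr 1
          have : 1 ≤ k := hkpos
          push_cast [Nat.cast_sub this]
          ring
        rw [hsplit] at hx2
        exact (ENNReal.add_lt_add_iff_right ENNReal.ofReal_ne_top).1 hx2
      calc volume (A k) ≤ volume (dyE α (2*N*(k-1:ℕ)) l m) := measure_mono hsub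
        _ ≤ dyG α (2*N*(k-1:ℕ)) * v := dyE_le α _ l m
        _ ≤ 2⁻¹ ^ (k-1) * v := mul_le_mul_left (dyG_pow hN0 hC (k-1)) v
        _ = 2 * 2⁻¹ ^ k * v := by
          have h1 : k = (k - 1) + 1 := (Nat.succ_pred_eq_of_pos hkpos).symm
          have h2 : (2:ℝ≥0∞) * 2⁻¹ ^ k = 2⁻¹ ^ (k-1) := by
            calc (2:ℝ≥0∞) * 2⁻¹ ^ k = 2 * (2⁻¹ ^ (k-1) * 2⁻¹) := by
                  conv_lhs => rw [h1, pow_succ]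
              _ = 2⁻¹ ^ (k-1) * (2 * 2⁻¹) := by ring
              _ = 2⁻¹ ^ (k-1) := by
                  rw [ENNReal.mul_inv_cancel two_ne_zero ENNReal.ofNat_ne_top, mul_one]
          rw [← h2]
  -- bound the integral over each shell
  have hbound : ∀ k : ℕ, ∫⁻ x in A k, dyF α l x ^ p
      ≤ ENNReal.ofReal (2*N*((k:ℝ)+1)) ^ p * (2 * 2⁻¹ ^ k * v) := by
    intro k
    calc ∫⁻ x in A k, dyF α l x ^ p ≤ ∫⁻ _ in A k, ENNReal.ofReal (2*N*((k:ℝ)+1)) ^ p := by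
          apply setLIntegral_mono measurable_const
          intro x hx
          exact ENNReal.rpow_le_rpow hx.2 hp0.le
      _ = ENNReal.ofReal (2*N*((k:ℝ)+1)) ^ p * volume (A k) := setLIntegral_const _ _
      _ ≤ _ := mul_le_mul_right (hAvol k) _
  have hsplit : ∫⁻ x in dyI l m, dyF α l x ^ p
      ≤ ∑' k : ℕ, ENNReal.ofReal (2*N*((k:ℝ)+1)) ^ p * (2 * 2⁻¹ ^ k * v) := by
    calc ∫⁻ x in dyI l m, dyF α l x ^ p
        ≤ ∫⁻ x in Z ∪ ⋃ k : ℕ, A k, dyF α l x ^ p := lintegral_mono_set hcover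
      _ ≤ (∫⁻ x in Z, dyF α l x ^ p) + ∫⁻ x in ⋃ k : ℕ, A k, dyF α l x ^ p :=
          lintegral_union_le _ _ _
      _ = ∫⁻ x in ⋃ k : ℕ, A k, dyF α l x ^ p := by
          rw [setLIntegral_measure_zero _ _ hZ0, zero_add]
      _ ≤ ∑' k : ℕ, ∫⁻ x in A k, dyF α l x ^ p := lintegral_iUnion_le _ _
      _ ≤ _ := ENNReal.tsum_le_tsum hbound
  -- the real series
  set g : ℕ → ℝ := fun k => (2*N*((k:ℝ)+1)) ^ p * (2⁻¹:ℝ) ^ k with hg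
  have hg0 : ∀ k, 0 ≤ g k := fun k => by positivity
  have hmaj : Summable (fun k : ℕ => (2*N)^p * (((k:ℝ)+1) ^ n₀ * (2⁻¹:ℝ) ^ k)) :=
    hsumh.mul_left _
  have hle : ∀ k : ℕ, g k ≤ (2*N)^p * (((k:ℝ)+1) ^ n₀ * (2⁻¹:ℝ) ^ k) := by
    intro k
    have h1 : (2*N*((k:ℝ)+1)) ^ p = (2*N)^p * ((k:ℝ)+1)^p :=
      Real.mul_rpow (by positivity) (by positivity)
    show (2*N*((k:ℝ)+1)) ^ p * (2⁻¹:ℝ) ^ k ≤ (2*N)^p * (((k:ℝ)+1) ^ n₀ * (2⁻¹:ℝ) ^ k)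
    rw [h1, mul_assoc]
    apply mul_le_mul_of_nonneg_left ?_ (by positivity)
    apply mul_le_mul_of_nonneg_right ?_ (by positivity)
    calc ((k:ℝ)+1) ^ p ≤ ((k:ℝ)+1) ^ ((n₀:ℕ):ℝ) :=
          Real.rpow_le_rpow_of_exponent_le (by linarith [Nat.cast_nonneg (α := ℝ) k]) (Nat.le_ceil p)
      _ = ((k:ℝ)+1) ^ (n₀:ℕ) := Real.rpow_natCast _ _
  have hsumg : Summable g := Summable.of_nonneg_of_le hg0 hle hmaj
  have htsum_le : ∑' k : ℕ, g k ≤ (2*N)^p * Sig := by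
    calc ∑' k : ℕ, g k ≤ ∑' k : ℕ, (2*N)^p * (((k:ℝ)+1) ^ n₀ * (2⁻¹:ℝ) ^ k) :=
          Summable.tsum_le_tsum hle hsumg hmaj
      _ = (2*N)^p * Sig := by rw [tsum_mul_left]
  -- identify the terms
  have hterm : ∀ k : ℕ, ENNReal.ofReal (2*N*((k:ℝ)+1)) ^ p * (2 * 2⁻¹ ^ k * v)
      = (2 * v) * ENNReal.ofReal (g k) := by
    intro k
    have h1 : ENNReal.ofReal (2*N*((k:ℝ)+1)) ^ p = ENNReal.ofReal ((2*N*((k:ℝ)+1)) ^ p) :=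
      ENNReal.ofReal_rpow_of_nonneg (by positivity) hp0.le
    have h2 : (2⁻¹ : ℝ≥0∞) ^ k = ENNReal.ofReal ((2⁻¹:ℝ) ^ k) := by
      rw [ENNReal.ofReal_pow (by norm_num), ENNReal.ofReal_inv_of_pos two_pos,
        ENNReal.ofReal_ofNat]
    show ENNReal.ofReal (2*N*((k:ℝ)+1)) ^ p * (2 * 2⁻¹ ^ k * v)
        = (2 * v) * ENNReal.ofReal ((2*N*((k:ℝ)+1)) ^ p * (2⁻¹:ℝ) ^ k)
    rw [h1, h2, ENNReal.ofReal_mul (by positivity)]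
    ring
  -- put it together
  have hfinal_real : 2 * ((2*N)^p * Sig) ≤ ((2 * (2 * Sig + 2)) * N) ^ p := by
    have hbase : (1:ℝ) ≤ 2 * Sig + 2 := by linarith
    have h1 : ((2 * (2 * Sig + 2)) * N) ^ p = (2*Sig+2) ^ p * (2*N) ^ p := by
      rw [← Real.mul_rpow (by linarith) (by positivity)]
      congr 1
      ring
    have h2 : (2*Sig+2) ≤ (2*Sig+2) ^ p := by
      calc (2*Sig+2) = (2*Sig+2) ^ (1:ℝ) := (Real.rpow_one _).symm
        _ ≤ (2*Sig+2) ^ p := Real.rpow_le_rpow_of_exponent_le hbase hp.le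
    have h3 : (0:ℝ) ≤ (2*N) ^ p := by positivity
    rw [h1]
    nlinarith [mul_le_mul_of_nonneg_right h2 h3]
  calc ∫⁻ x in dyI l m, dyF α l x ^ p
      ≤ ∑' k : ℕ, ENNReal.ofReal (2*N*((k:ℝ)+1)) ^ p * (2 * 2⁻¹ ^ k * v) := hsplit
    _ = (2 * v) * ∑' k : ℕ, ENNReal.ofReal (g k) := by
        rw [tsum_congr hterm, ENNReal.tsum_mul_left]
    _ = (2 * v) * ENNReal.ofReal (∑' k : ℕ, g k) := by
        rw [ENNReal.ofReal_tsum_of_nonneg hg0 hsumg]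
    _ ≤ (2 * v) * ENNReal.ofReal ((2*N)^p * Sig) :=
        mul_le_mul_right (ENNReal.ofReal_le_ofReal htsum_le) _
    _ = ENNReal.ofReal (2 * ((2*N)^p * Sig)) * v := by
        rw [ENNReal.ofReal_mul (by norm_num : (0:ℝ) ≤ 2), ENNReal.ofReal_ofNat]
        ring
    _ ≤ ENNReal.ofReal (((2 * (2 * Sig + 2)) * N) ^ p) * v :=
        mul_le_mul_left (ENNReal.ofReal_le_ofReal hfinal_real) _
    _ = ENNReal.ofReal ((2 * (2 * Sig + 2)) * N) ^ p * v := by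
        rw [ENNReal.ofReal_rpow_of_nonneg (by positivity) hp0.le]
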